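/- Let Γ₁, …, Γₙ be countable groups and Γ = Γ₁ × ⋯ × Γₙ. For each i, let 𝒢ᵢ be a family of subgroups of Γᵢ and suppose there exists a map μᵢ : Γᵢ → Prob(Γᵢ) satisfying lim_{k → ∞/𝒢ᵢ} ‖μᵢ(gkh) − g·μᵢ(k)‖₁ = 0 for all g, h ∈ Γᵢ. Then the map μ : Γ → Prob(Γ), μ(g₁,…,gₙ) = μ₁(g₁) × ⋯ × μₙ(gₙ), satisfies lim_{k → ∞/𝒢} ‖μ(gkh) − g·μ(k)‖₁ = 0 for all g, h ∈ Γ, where 𝒢 = ⋃ᵢ { Λ × ∏_{j≠i} Γⱼ : Λ ∈ 𝒢ᵢ }. -/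

import Mathlib

open scoped ENNReal

section Aux

lemma tsum_pi_prod_aux : ∀ {n : ℕ} (Γ : Fin n → Type*) (f : ∀ i, Γ i → ℝ≥0∞),
    ∑' s : (∀ i, Γ i), ∏ i, f i (s i) = ∏ i, ∑' t, f i t := by
  intro n
  induction n with
  | zero =>
    intro Γ f
    simp [tsum_eq_single (default : ∀ i, Γ i) (fun b hb => absurd (Subsingleton.elim b default) hb)]
  | succ m ih =>
    intro Γ f
    rw [← (Fin.consEquiv Γ).tsum_eq (fun s => ∏ i, f i (s i)), ENNReal.tsum_prod']
    simp only [Fin.consEquiv_apply, Fin.prod_univ_succ, Fin.cons_zero, Fin.cons_succ]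
    calc ∑' (a : Γ 0) (b : ∀ i : Fin m, Γ i.succ), f 0 a * ∏ i, f i.succ (b i)
        = ∑' (a : Γ 0), f 0 a * ∑' (b : ∀ i : Fin m, Γ i.succ), ∏ i, f i.succ (b i) := by
          simp [ENNReal.tsum_mul_left]
      _ = (∑' a, f 0 a) * ∏ i : Fin m, ∑' t, f i.succ t := by
          rw [ih (fun i => Γ i.succ) (fun i => f i.succ), ENNReal.tsum_mul_right]

lemma abs_prod_sub_prod_le_aux {ι : Type*} [DecidableEq ι] (s : Finset ι) (a b : ι → ℝ)
    (ha : ∀ i, 0 ≤ a i) (hb : ∀ i, 0 ≤ b i) :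
    |(∏ i ∈ s, a i) - ∏ i ∈ s, b i| ≤
      ∑ i ∈ s, |a i - b i| * ∏ j ∈ s.erase i, (a j + b j) := by
  induction s using Finset.cons_induction with
  | empty => simp
  | cons x t hx ih =>
    rw [Finset.prod_cons, Finset.prod_cons, Finset.sum_cons]
    have key : |a x * ∏ i ∈ t, a i - b x * ∏ i ∈ t, b i| ≤
        |a x - b x| * ∏ i ∈ t, a i + b x * |(∏ i ∈ t, a i) - ∏ i ∈ t, b i| := by
      have : a x * ∏ i ∈ t, a i - b x * ∏ i ∈ t, b i
          = (a x - b x) * ∏ i ∈ t, a i + b x * ((∏ i ∈ t, a i) - ∏ i ∈ t, b i) := by ring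
      rw [this]
      refine (abs_add_le _ _).trans ?_
      rw [abs_mul, abs_mul, abs_of_nonneg (Finset.prod_nonneg fun i _ => ha i),
        abs_of_nonneg (hb x)]
    refine key.trans ?_
    have h1 : (∏ i ∈ t, a i) ≤ ∏ i ∈ t, (a i + b i) :=
      Finset.prod_le_prod (fun i _ => ha i) (fun i _ => le_add_of_nonneg_right (hb i))
    have h2 : b x * |(∏ i ∈ t, a i) - ∏ i ∈ t, b i| ≤
        (a x + b x) * ∑ i ∈ t, |a i - b i| * ∏ j ∈ t.erase i, (a j + b j) := by
      refine mul_le_mul (le_add_of_nonneg_left (ha x)) (ih) (abs_nonneg _) ?_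
      exact add_nonneg (ha x) (hb x)
    have herc : (Finset.cons x t hx).erase x = t := by
      rw [Finset.erase_cons]
    rw [herc]
    refine add_le_add (mul_le_mul_of_nonneg_left h1 (abs_nonneg _)) (h2.trans ?_)
    rw [Finset.mul_sum]
    refine Finset.sum_le_sum fun i hi => ?_
    have hix : i ≠ x := fun h => hx (h ▸ hi)
    have : (Finset.cons x t hx).erase i = Finset.cons x (t.erase i) (by simp [hx]) := by
      ext j
      simp only [Finset.mem_erase, Finset.mem_cons]
      constructor
      · rintro ⟨hj, hj2 | hj2⟩
        · exact Or.inl hj2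
        · exact Or.inr ⟨hj, hj2⟩
      · rintro (rfl | ⟨hj, hj2⟩)
        · exact ⟨hix.symm, Or.inl rfl⟩
        · exact ⟨hj, Or.inr hj2⟩
    rw [this, Finset.prod_cons]
    ring_nf
    exact le_of_eq (by ring)

end Aux

/-- A subset `F ⊆ G` is small relative to a family `𝒢` of subgroups of `G` if it is contained
in a finite union of sets of the form `g Σ h` with `g, h ∈ G` and `Σ ∈ 𝒢`. -/
def SmallRel {G : Type*} [Group G] (𝒢 : Set (Subgroup G)) (F : Set G) : Prop :=
  ∃ (n : ℕ) (g h : Fin n → G) (S : Fin n → Subgroup G),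
    (∀ i, S i ∈ 𝒢) ∧ F ⊆ ⋃ i, (fun x => g i * x * h i) '' (S i : Set G)

section SmallRelAux

variable {G : Type*} [Group G]

lemma smallRel_iff_aux (𝒢 : Set (Subgroup G)) (F : Set G) :
    SmallRel 𝒢 F ↔ ∃ s : Finset (G × G × Subgroup G), (∀ p ∈ s, p.2.2 ∈ 𝒢) ∧
      F ⊆ ⋃ p ∈ s, (fun x => p.1 * x * p.2.1) '' (p.2.2 : Set G) := by
  classical
  constructor
  · rintro ⟨n, g, h, S, hS, hF⟩
    refine ⟨Finset.image (fun i => (g i, h i, S i)) Finset.univ, ?_, ?_⟩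
    · intro p hp
      simp only [Finset.mem_image, Finset.mem_univ, true_and] at hp
      obtain ⟨i, rfl⟩ := hp
      exact hS i
    · refine hF.trans ?_
      intro x hx
      simp only [Set.mem_iUnion] at hx ⊢
      obtain ⟨i, hi⟩ := hx
      exact ⟨(g i, h i, S i), Finset.mem_image.2 ⟨i, Finset.mem_univ i, rfl⟩, hi⟩
  · rintro ⟨s, hs, hF⟩
    refine ⟨s.card, fun i => (s.equivFin.symm i : G × G × Subgroup G).1,
      fun i => (s.equivFin.symm i : G × G × Subgroup G).2.1,
      fun i => (s.equivFin.symm i : G × G × Subgroup G).2.2,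
      fun i => hs _ (s.equivFin.symm i).2, ?_⟩
    refine hF.trans ?_
    intro x hx
    simp only [Set.mem_iUnion] at hx ⊢
    obtain ⟨p, hp, hxp⟩ := hx
    exact ⟨s.equivFin ⟨p, hp⟩, by simpa using hxp⟩

lemma SmallRel.mono_aux {𝒢 : Set (Subgroup G)} {F F' : Set G}
    (h : SmallRel 𝒢 F') (hFF : F ⊆ F') : SmallRel 𝒢 F := by
  obtain ⟨n, g, hh, S, hS, hF⟩ := h
  exact ⟨n, g, hh, S, hS, hFF.trans hF⟩

lemma smallRel_iUnion_aux {𝒢 : Set (Subgroup G)} {m : ℕ} {F : Fin m → Set G}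
    (h : ∀ i, SmallRel 𝒢 (F i)) : SmallRel 𝒢 (⋃ i, F i) := by
  classical
  rw [smallRel_iff_aux]
  have h' := fun i => (smallRel_iff_aux 𝒢 (F i)).1 (h i)
  choose s hs hFs using h'
  refine ⟨Finset.univ.biUnion s, ?_, ?_⟩
  · intro p hp
    simp only [Finset.mem_biUnion, Finset.mem_univ, true_and] at hp
    obtain ⟨i, hi⟩ := hp
    exact hs i p hi
  · intro x hx
    simp only [Set.mem_iUnion] at hx
    obtain ⟨i, hi⟩ := hx
    have := hFs i hi
    simp only [Set.mem_iUnion] at this ⊢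
    obtain ⟨p, hp, hxp⟩ := this
    exact ⟨p, Finset.mem_biUnion.2 ⟨i, Finset.mem_univ i, hp⟩, hxp⟩

end SmallRelAux

lemma smallRel_preimage_aux {n : ℕ} (Γ : Fin n → Type*) [∀ i, Group (Γ i)]
    (𝒢 : ∀ i, Set (Subgroup (Γ i))) (i : Fin n) {F : Set (Γ i)} (hsm : SmallRel (𝒢 i) F) :
    SmallRel
      {H : Subgroup (∀ i, Γ i) | ∃ i Λ, Λ ∈ 𝒢 i ∧
        H = Subgroup.pi Set.univ (Function.update (fun j => (⊤ : Subgroup (Γ j))) i Λ)}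
      ((fun k => k i) ⁻¹' F) := by
  classical
  obtain ⟨m, g, h, S, hS, hF⟩ := hsm
  refine ⟨m, fun t => Function.update (1 : ∀ j, Γ j) i (g t),
    fun t => Function.update (1 : ∀ j, Γ j) i (h t),
    fun t => Subgroup.pi Set.univ (Function.update (fun j => (⊤ : Subgroup (Γ j))) i (S t)),
    fun t => ⟨i, S t, hS t, rfl⟩, ?_⟩
  intro k hk
  have := hF hk
  simp only [Set.mem_iUnion, Set.mem_image] at this ⊢
  obtain ⟨t, σ, hσ, hkt⟩ := this
  refine ⟨t, (Function.update (1 : ∀ j, Γ j) i (g t))⁻¹ * k *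
    (Function.update (1 : ∀ j, Γ j) i (h t))⁻¹, ?_, by group⟩
  rw [SetLike.mem_coe, Subgroup.mem_pi]
  intro j _
  rcases eq_or_ne j i with rfl | hj
  · have : ((Function.update (1 : ∀ j, Γ j) j (g t))⁻¹ * k *
        (Function.update (1 : ∀ j, Γ j) j (h t))⁻¹) j = σ := by
      simp only [Pi.mul_apply, Pi.inv_apply, Function.update_self]
      rw [← hkt]
      group
    rw [Function.update_self, this]
    exact hσ
  · simp [Function.update_of_ne hj]

lemma key_bound_aux {n : ℕ} (Γ : Fin n → Type*) (a b : ∀ i, Γ i → ℝ)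
    (ha0 : ∀ i t, 0 ≤ a i t) (hb0 : ∀ i t, 0 ≤ b i t)
    (hsa : ∀ i, Summable (a i)) (hsb : ∀ i, Summable (b i))
    (hta : ∀ i, ∑' t, a i t = 1) (htb : ∀ i, ∑' t, b i t = 1) :
    ∑' s : (∀ i, Γ i), ENNReal.ofReal |(∏ i, a i (s i)) - ∏ i, b i (s i)| ≤
      ∑ i : Fin n, 2 ^ n * ENNReal.ofReal (∑' t, |a i t - b i t|) := by
  classical
  have step1 : ∑' s : (∀ i, Γ i), ENNReal.ofReal |(∏ i, a i (s i)) - ∏ i, b i (s i)| ≤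
      ∑' s : (∀ i, Γ i), ∑ i : Fin n, ENNReal.ofReal
        (|a i (s i) - b i (s i)| * ∏ j ∈ Finset.univ.erase i, (a j (s j) + b j (s j))) := by
    refine ENNReal.tsum_le_tsum fun s => ?_
    calc ENNReal.ofReal |(∏ i, a i (s i)) - ∏ i, b i (s i)|
        ≤ ENNReal.ofReal (∑ i : Fin n, |a i (s i) - b i (s i)| *
            ∏ j ∈ Finset.univ.erase i, (a j (s j) + b j (s j))) :=
          ENNReal.ofReal_le_ofReal (abs_prod_sub_prod_le_aux Finset.univ
            (fun i => a i (s i)) (fun i => b i (s i)) (fun i => ha0 i (s i)) (fun i => hb0 i (s i)))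
      _ ≤ _ := le_of_eq (ENNReal.ofReal_sum_of_nonneg fun i _ =>
          mul_nonneg (abs_nonneg _) (Finset.prod_nonneg fun j _ =>
            add_nonneg (ha0 j (s j)) (hb0 j (s j))))
  refine step1.trans ?_
  rw [Summable.tsum_finsetSum (fun i _ => ENNReal.summable)]
  refine Finset.sum_le_sum fun i _ => ?_
  set F : ∀ j, Γ j → ℝ≥0∞ := Function.update
      (fun j => fun t => ENNReal.ofReal (a j t + b j t)) i
      (fun t => ENNReal.ofReal |a i t - b i t|) with hF
  have hFi : F i = fun t => ENNReal.ofReal |a i t - b i t| := Function.update_self _ _ _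
  have hFj : ∀ j, j ≠ i → F j = fun t => ENNReal.ofReal (a j t + b j t) :=
    fun j hj => Function.update_of_ne hj _ _
  have hsummand : ∀ s : ∀ j, Γ j, ENNReal.ofReal
      (|a i (s i) - b i (s i)| * ∏ j ∈ Finset.univ.erase i, (a j (s j) + b j (s j)))
      = ∏ j, F j (s j) := by
    intro s
    rw [ENNReal.ofReal_mul (abs_nonneg _),
      ENNReal.ofReal_prod_of_nonneg (fun j _ => add_nonneg (ha0 j (s j)) (hb0 j (s j))),
      ← Finset.mul_prod_erase Finset.univ (fun j => F j (s j)) (Finset.mem_univ i)]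
    congr 1
    · rw [hFi]
    · exact Finset.prod_congr rfl fun j hj => by
        rw [hFj j (Finset.mem_erase.1 hj).1]
  calc ∑' s : (∀ j, Γ j), ENNReal.ofReal
        (|a i (s i) - b i (s i)| * ∏ j ∈ Finset.univ.erase i, (a j (s j) + b j (s j)))
      = ∑' s : (∀ j, Γ j), ∏ j, F j (s j) := tsum_congr hsummand
    _ = ∏ j, ∑' t, F j t := tsum_pi_prod_aux Γ F
    _ = (∑' t, F i t) * ∏ j ∈ Finset.univ.erase i, ∑' t, F j t :=
        (Finset.mul_prod_erase Finset.univ (fun j => ∑' t, F j t) (Finset.mem_univ i)).symm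
    _ ≤ ENNReal.ofReal (∑' t, |a i t - b i t|) * ∏ j ∈ Finset.univ.erase i, (2 : ℝ≥0∞) := by
        refine mul_le_mul' (le_of_eq ?_) (Finset.prod_le_prod' fun j hj => ?_)
        · rw [hFi, ← ENNReal.ofReal_tsum_of_nonneg (fun t => abs_nonneg _)
            (((hsa i).sub (hsb i)).abs)]
        · rw [hFj j (Finset.mem_erase.1 hj).1,
            ← ENNReal.ofReal_tsum_of_nonneg (fun t => add_nonneg (ha0 j t) (hb0 j t))
              ((hsa j).add (hsb j))]
          rw [Summable.tsum_add (hsa j) (hsb j), hta j, htb j]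
          norm_num
    _ ≤ 2 ^ n * ENNReal.ofReal (∑' t, |a i t - b i t|) := by
        rw [mul_comm, Finset.prod_const]
        refine mul_le_mul' (pow_le_pow_right₀ one_le_two ?_) le_rfl
        calc (Finset.univ.erase i).card ≤ Finset.univ.card := Finset.card_erase_le ..
          _ = n := Finset.card_univ.trans (Fintype.card_fin n)

/-- If each `μᵢ : Γᵢ → Prob(Γᵢ)` satisfies `lim_{k → ∞/𝒢ᵢ} ‖μᵢ(gkh) - g·μᵢ(k)‖₁ = 0`
for all `g, h ∈ Γᵢ`, then the product map `μ(g₁,…,gₙ) = μ₁(g₁) × ⋯ × μₙ(gₙ)` satisfies the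
analogous condition on `Γ = Γ₁ × ⋯ × Γₙ` relative to `𝒢 = ⋃ᵢ {Λ × ∏_{j≠i} Γⱼ : Λ ∈ 𝒢ᵢ}`. -/
theorem product_biexactness_map {n : ℕ} (Γ : Fin n → Type*) [∀ i, Group (Γ i)]
    [∀ i, Countable (Γ i)]
    (𝒢 : ∀ i, Set (Subgroup (Γ i)))
    (μ : ∀ i, Γ i → Γ i → ℝ)
    (hprob : ∀ i k, (∀ s, 0 ≤ μ i k s) ∧ Summable (μ i k) ∧ ∑' s, μ i k s = 1)
    (hconv : ∀ i (g h : Γ i), ∀ ε > (0 : ℝ),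
      SmallRel (𝒢 i) {k | ε < ∑' s, |μ i (g * k * h) s - μ i k (g⁻¹ * s)|}) :
    ∀ g h : (∀ i, Γ i), ∀ ε > (0 : ℝ),
      SmallRel
        {H : Subgroup (∀ i, Γ i) | ∃ i Λ, Λ ∈ 𝒢 i ∧
          H = Subgroup.pi Set.univ
                (Function.update (fun j => (⊤ : Subgroup (Γ j))) i Λ)}
        {k | ε < ∑' s : (∀ i, Γ i),
          |(∏ i, μ i ((g * k * h) i) (s i)) - ∏ i, μ i (k i) ((g⁻¹ * s) i)|} := by
  classical
  intro g h ε hε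
  set C : ℝ := ((n : ℝ) + 1) * 2 ^ n with hCdef
  have hCpos : 0 < C := by positivity
  set ε' : ℝ := ε / C with hε'def
  have hε' : 0 < ε' := div_pos hε hCpos
  refine SmallRel.mono_aux (smallRel_iUnion_aux (F := fun i : Fin n =>
    (fun k : ∀ j, Γ j => k i) ⁻¹'
      {k' | ε' < ∑' s, |μ i (g i * k' * h i) s - μ i k' ((g i)⁻¹ * s)|})
    (fun i => smallRel_preimage_aux Γ 𝒢 i (hconv i (g i) (h i) ε' hε'))) ?_
  intro k hk
  simp only [Set.mem_setOf_eq, Pi.mul_apply, Pi.inv_apply] at hk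
  by_contra hc
  simp only [Set.mem_iUnion, Set.mem_preimage, Set.mem_setOf_eq, not_exists, not_lt] at hc
  -- hc : ∀ i, ∑' s, |μ i (g i * k i * h i) s - μ i (k i) ((g i)⁻¹ * s)| ≤ ε'
  set a : ∀ i, Γ i → ℝ := fun i => μ i (g i * k i * h i) with hadef
  set b : ∀ i, Γ i → ℝ := fun i t => μ i (k i) ((g i)⁻¹ * t) with hbdef
  have hsb : ∀ i, Summable (b i) := fun i =>
    (hprob i (k i)).2.1.comp_injective (mul_right_injective (g i)⁻¹)
  have htb : ∀ i, ∑' t, b i t = 1 := fun i => by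
    rw [← (hprob i (k i)).2.2]
    exact (Equiv.mulLeft (g i)⁻¹).tsum_eq (μ i (k i))
  have key := key_bound_aux Γ a b (fun i t => (hprob i _).1 t) (fun i t => (hprob i _).1 _)
    (fun i => (hprob i _).2.1) hsb (fun i => (hprob i _).2.2) htb
  set f : (∀ i, Γ i) → ℝ := fun s => |(∏ i, a i (s i)) - ∏ i, b i (s i)| with hfdef
  have hk' : ε < ∑' s, f s := hk
  have hRHSne : (∑ i : Fin n, 2 ^ n * ENNReal.ofReal (∑' t, |a i t - b i t|)) ≠ ⊤ := by
    refine (ENNReal.sum_lt_top.2 fun i _ => ?_).ne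
    exact ENNReal.mul_lt_top (ENNReal.pow_lt_top (by norm_num)) ENNReal.ofReal_lt_top
  have hfs : Summable f := by
    have h1 : ∑' s, ENNReal.ofReal (f s) ≠ ⊤ := ne_top_of_le_ne_top hRHSne key
    exact (ENNReal.summable_toReal h1).congr fun s => ENNReal.toReal_ofReal (abs_nonneg _)
  have hlt : ENNReal.ofReal ε < ∑' s, ENNReal.ofReal (f s) := by
    rw [← ENNReal.ofReal_tsum_of_nonneg (fun s => abs_nonneg _) hfs]
    exact (ENNReal.ofReal_lt_ofReal_iff (hε.trans hk')).2 hk'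
  have hfinal : ∑' s, ENNReal.ofReal (f s) ≤ ENNReal.ofReal ε := by
    refine key.trans ?_
    calc ∑ i : Fin n, 2 ^ n * ENNReal.ofReal (∑' t, |a i t - b i t|)
        ≤ ∑ _i : Fin n, 2 ^ n * ENNReal.ofReal ε' :=
          Finset.sum_le_sum fun i _ => mul_le_mul' le_rfl (ENNReal.ofReal_le_ofReal (hc i))
      _ = (n : ℝ≥0∞) * (2 ^ n * ENNReal.ofReal ε') := by
          rw [Finset.sum_const, Finset.card_univ, Fintype.card_fin, nsmul_eq_mul]
      _ ≤ ((n : ℝ≥0∞) + 1) * (2 ^ n * ENNReal.ofReal ε') :=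
          mul_le_mul_left le_self_add _
      _ = ENNReal.ofReal ε := by
          have hCe : C * ε' = ε := by
            rw [hε'def, mul_comm, div_mul_cancel₀ _ hCpos.ne']
          rw [← hCe, ENNReal.ofReal_mul hCpos.le, hCdef,
            ENNReal.ofReal_mul (by positivity : (0:ℝ) ≤ (n : ℝ) + 1),
            ENNReal.ofReal_pow (by norm_num : (0:ℝ) ≤ 2)]
          rw [show ENNReal.ofReal ((n:ℝ)+1) = (n:ℝ≥0∞) + 1 by
              rw [ENNReal.ofReal_add (by positivity) zero_le_one, ENNReal.ofReal_natCast,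
                ENNReal.ofReal_one],
            show ENNReal.ofReal 2 = (2:ℝ≥0∞) by norm_num]
          ring
  exact absurd (hlt.trans_le hfinal) (lt_irrefl _)
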